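/- In PSL_2(\mathbb{Z}/p\mathbb{Z}) for a prime p \geq 5, the normalizer of a subgroup of order p has order p(p-1)/2. -/

import Mathlib

open scoped MatrixGroups
open Matrix

set_option maxRecDepth 20000

namespace PSLaux
variable (p : ℕ) [Fact p.Prime]
local notation "SL" => Matrix.SpecialLinearGroup (Fin 2) (ZMod p)
local notation "PSLp" => Matrix.ProjectiveSpecialLinearGroup (Fin 2) (ZMod p)

lemma d11 {A : SL} (h1 : A.1 1 0 = 0) (h2 : A.1 0 0 = 1) : A.1 1 1 = 1 := by
  have := A.2
  rw [Matrix.det_fin_two] at this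
  rw [h1, h2] at this
  simpa using this

/-- upper triangular unipotent subgroup -/
def U : Subgroup SL where
  carrier := {A | A.1 1 0 = 0 ∧ A.1 0 0 = 1}
  one_mem' := by simp
  mul_mem' := by
    rintro A B ⟨h1, h2⟩ ⟨h3, h4⟩
    constructor <;> simp [Matrix.SpecialLinearGroup.coe_mul, Matrix.mul_apply, Fin.sum_univ_two,
      h1, h2, h3, h4]
  inv_mem' := by
    rintro A ⟨h1, h2⟩
    show A⁻¹.1 1 0 = 0 ∧ A⁻¹.1 0 0 = 1
    rw [Matrix.SpecialLinearGroup.SL2_inv_expl]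
    exact ⟨by simp [h1], by simp [d11 p h1 h2]⟩

/-- Borel subgroup of upper triangular matrices -/
def B : Subgroup SL where
  carrier := {A | A.1 1 0 = 0}
  one_mem' := by simp
  mul_mem' := by
    intro A B h1 h3
    simp only [Set.mem_setOf_eq] at *
    simp [Matrix.SpecialLinearGroup.coe_mul, Matrix.mul_apply, Fin.sum_univ_two, h1, h3]
  inv_mem' := by
    intro A h1
    replace h1 : A.1 1 0 = 0 := h1
    show A⁻¹.1 1 0 = 0
    rw [Matrix.SpecialLinearGroup.SL2_inv_expl]
    simp [h1]

lemma U_le_B : U p ≤ B p := fun A hA => hA.1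
lemma mem_U_iff {A : SL} : A ∈ U p ↔ A.1 1 0 = 0 ∧ A.1 0 0 = 1 := Iff.rfl
lemma mem_B_iff {A : SL} : A ∈ B p ↔ A.1 1 0 = 0 := Iff.rfl

def uMk (t : ZMod p) : SL := ⟨!![1, t; 0, 1], by simp [Matrix.det_fin_two_of]⟩

lemma uMk_mem (t : ZMod p) : uMk p t ∈ U p := by
  rw [mem_U_iff]; constructor <;> simp [uMk]

lemma eq_uMk {A : SL} (hA : A ∈ U p) : A = uMk p (A.1 0 1) := by
  obtain ⟨h1, h2⟩ := (mem_U_iff p).mp hA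
  ext i j
  fin_cases i <;> fin_cases j <;> simp [uMk, h1, h2, d11 p h1 h2]

noncomputable def UEquiv : (U p) ≃ ZMod p where
  toFun A := A.1.1 0 1
  invFun t := ⟨uMk p t, uMk_mem p t⟩
  left_inv A := by
    ext : 1
    exact (eq_uMk p A.2).symm
  right_inv t := by simp [uMk]

lemma card_U : Nat.card (U p) = p := by
  rw [Nat.card_congr (UEquiv p)]
  simp [Nat.card_eq_fintype_card, ZMod.card]

def bMk (a : (ZMod p)ˣ) (t : ZMod p) : SL :=
  ⟨!![(a : ZMod p), t; 0, ((a⁻¹ : (ZMod p)ˣ) : ZMod p)], by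
    rw [Matrix.det_fin_two_of, ← Units.val_mul, mul_inv_cancel]
    rw [mul_zero, sub_zero, Units.val_one]⟩

lemma bMk_mem (a : (ZMod p)ˣ) (t : ZMod p) : bMk p a t ∈ B p :=
  (mem_B_iff p).mpr rfl

lemma B_unit {A : SL} (hA : A ∈ B p) : A.1 0 0 * A.1 1 1 = 1 := by
  have := A.2
  rw [Matrix.det_fin_two] at this
  rw [(mem_B_iff p).mp hA] at this
  simpa using this

noncomputable def BEquiv : (B p) ≃ (ZMod p)ˣ × ZMod p where
  toFun A := (Units.mkOfMulEqOne _ _ (B_unit p A.2), A.1.1 0 1)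
  invFun x := ⟨bMk p x.1 x.2, bMk_mem p x.1 x.2⟩
  left_inv A := by
    have h1 := (mem_B_iff p).mp A.2
    ext : 1
    ext i j
    fin_cases i <;> fin_cases j
    · rfl
    · rfl
    · exact h1.symm
    · rfl
  right_inv x := by
    refine Prod.ext (Units.ext rfl) rfl

lemma card_B : Nat.card (B p) = p * (p - 1) := by
  rw [Nat.card_congr (BEquiv p), Nat.card_eq_fintype_card]
  simp [ZMod.card, ZMod.card_units_eq_totient, Nat.totient_prime (Fact.out : p.Prime), mul_comm]

lemma conj_mem_U {A X : SL} (hA : A ∈ B p) (hX : X ∈ U p) : A * X * A⁻¹ ∈ U p := by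
  obtain ⟨x1, x2⟩ := (mem_U_iff p).mp hX
  have x3 := d11 p x1 x2
  have a1 := (mem_B_iff p).mp hA
  have a2 := B_unit p hA
  rw [mem_U_iff]
  constructor <;>
  · simp only [Matrix.SpecialLinearGroup.coe_mul, Matrix.SpecialLinearGroup.coe_inv, Matrix.adjugate_fin_two,
      Matrix.mul_apply, Fin.sum_univ_two, Matrix.cons_val_zero, Matrix.cons_val_one,
      Matrix.head_cons, Matrix.head_fin_const, Matrix.of_apply, Matrix.cons_val']
    ring_nf
    simp only [x1, x2, x3, a1]
    ring_nf
    all_goals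
      first
      | linear_combination a2
      | linear_combination X.1 0 1 * a2

lemma center_le_B : Subgroup.center SL ≤ B p := by
  intro A hA
  obtain ⟨r, -, hr⟩ := Matrix.SpecialLinearGroup.mem_center_iff.mp hA
  rw [mem_B_iff, ← hr]
  simp [Matrix.scalar_apply]

lemma eq_one_of_mem_U_center {A : SL} (hU : A ∈ U p) (hZ : A ∈ Subgroup.center SL) :
    A = 1 := by
  obtain ⟨r, -, hr⟩ := Matrix.SpecialLinearGroup.mem_center_iff.mp hZ
  obtain ⟨-, h2⟩ := (mem_U_iff p).mp hU
  have : r = 1 := by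
    rw [← hr] at h2
    simpa [Matrix.scalar_apply] using h2
  ext i j
  rw [← hr, this]
  simp [Matrix.scalar_apply, Matrix.SpecialLinearGroup.coe_one, Matrix.diagonal, Matrix.one_apply]

lemma neg_one_mem_center : (-1 : SL) ∈ Subgroup.center SL := by
  rw [Matrix.SpecialLinearGroup.mem_center_iff]
  refine ⟨-1, by simp, ?_⟩
  simp [Matrix.scalar_apply]
  ext i j
  simp [Matrix.diagonal, Matrix.one_apply]
  split <;> simp

lemma center_eq : Subgroup.center SL = Subgroup.zpowers (-1 : SL) := by
  apply le_antisymm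
  · intro A hA
    obtain ⟨r, hr2, hr⟩ := Matrix.SpecialLinearGroup.mem_center_iff.mp hA
    simp only [Fintype.card_fin] at hr2
    rcases sq_eq_one_iff.mp hr2 with h | h
    · rw [h] at hr
      have : A = 1 := by
        ext i j; rw [← hr]; simp [Matrix.scalar_apply, Matrix.one_apply, Matrix.diagonal]
      rw [this]; exact one_mem _
    · rw [h] at hr
      have : A = -1 := by
        ext i j; rw [← hr]
        simp [Matrix.scalar_apply]
        rw [Matrix.diagonal]
        simp [Matrix.one_apply]
        split <;> simp
      rw [this]
      exact Subgroup.mem_zpowers _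
  · rw [Subgroup.zpowers_le]
    exact neg_one_mem_center p

lemma card_center (hp : 5 ≤ p) : Nat.card (Subgroup.center SL) = 2 := by
  rw [center_eq, Nat.card_zpowers]
  haveI : Fact (2 < p) := ⟨by omega⟩
  have hne : (-1 : SL) ≠ 1 := by
    intro h
    have := congrArg (fun A : SL => A.1 0 0) h
    simp at this
    exact ZMod.neg_one_ne_one this
  have hsq : (-1 : SL) ^ 2 = 1 := by simp
  exact orderOf_eq_prime hsq hne

lemma card_eq_ker_mul_range {G H : Type*} [Group G] [Group H] [Finite G] (f : G →* H) :
    Nat.card G = Nat.card f.ker * Nat.card f.range := by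
  rw [Subgroup.card_eq_card_quotient_mul_card_subgroup f.ker,
    Nat.card_congr (QuotientGroup.quotientKerEquivRange f).toEquiv, mul_comm]

lemma det_surjective :
    Function.Surjective (Matrix.GeneralLinearGroup.det (n := Fin 2) (R := ZMod p)) := by
  intro u
  refine ⟨⟨!![(u : ZMod p), 0; 0, 1], !![((u⁻¹ : (ZMod p)ˣ) : ZMod p), 0; 0, 1], ?_, ?_⟩, ?_⟩
  · rw [Matrix.mul_fin_two, ← Units.val_mul, mul_inv_cancel]
    simp only [Units.val_one, mul_zero, zero_mul, mul_one, one_mul, add_zero, zero_add]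
    exact Matrix.one_fin_two.symm
  · rw [Matrix.mul_fin_two, ← Units.val_mul, inv_mul_cancel]
    simp only [Units.val_one, mul_zero, zero_mul, mul_one, one_mul, add_zero, zero_add]
    exact Matrix.one_fin_two.symm
  · apply Units.ext
    show Matrix.det _ = _
    rw [Matrix.det_fin_two_of]
    rw [mul_one, mul_zero, sub_zero]

lemma range_toGL : (Matrix.SpecialLinearGroup.toGL (n := Fin 2) (R := ZMod p)).range
    = (Matrix.GeneralLinearGroup.det (n := Fin 2) (R := ZMod p)).ker := by
  ext g
  constructor
  · rintro ⟨S, rfl⟩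
    rw [MonoidHom.mem_ker]
    apply Units.ext
    show Matrix.det _ = _
    exact S.2
  · intro hg
    rw [MonoidHom.mem_ker] at hg
    have hdet : Matrix.det (g : Matrix (Fin 2) (Fin 2) (ZMod p)) = 1 := by
      have := congrArg (Units.val) hg
      simpa using this
    exact ⟨⟨(g : Matrix (Fin 2) (Fin 2) (ZMod p)), hdet⟩, Units.ext rfl⟩

lemma toGL_injective :
    Function.Injective (Matrix.SpecialLinearGroup.toGL (n := Fin 2) (R := ZMod p)) := by
  intro a b h
  ext i j
  exact congrFun (congrFun (congrArg
    (fun u : GL (Fin 2) (ZMod p) => (u : Matrix (Fin 2) (Fin 2) (ZMod p))) h) i) j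

lemma card_SL : Nat.card SL = p * (p ^ 2 - 1) := by
  have h1 := card_eq_ker_mul_range (Matrix.GeneralLinearGroup.det (n := Fin 2) (R := ZMod p))
  rw [MonoidHom.range_eq_top_of_surjective _ (det_surjective p)] at h1
  have hker : Nat.card (Matrix.GeneralLinearGroup.det (n := Fin 2) (R := ZMod p)).ker
      = Nat.card SL := by
    rw [← range_toGL]
    exact (Nat.card_congr (Equiv.ofInjective _ (toGL_injective p)).symm)
  have htop : Nat.card ((⊤ : Subgroup (ZMod p)ˣ)) = p - 1 := by
    rw [Nat.card_congr Subgroup.topEquiv.toEquiv, Nat.card_eq_fintype_card,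
      ZMod.card_units_eq_totient, Nat.totient_prime Fact.out]
  rw [hker, htop, Matrix.card_GL_field] at h1
  have hq : Fintype.card (ZMod p) = p := ZMod.card p
  rw [hq] at h1
  simp only [Fin.prod_univ_two, Fin.val_zero, pow_zero, Fin.val_one, pow_one] at h1
  have hp5 : 2 ≤ p := (Fact.out : p.Prime).two_le
  have key : (p ^ 2 - 1) * (p ^ 2 - p) = p * (p ^ 2 - 1) * (p - 1) := by
    have h2 : p ^ 2 - p = p * (p - 1) := by
      cases p with
      | zero => simp
      | succ n => rw [pow_two, Nat.mul_succ, Nat.add_sub_cancel, Nat.succ_sub_one]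
    rw [h2]; ring
  rw [key] at h1
  exact (Nat.eq_of_mul_eq_mul_right (by omega) h1.symm)

noncomputable def pr : SL →* PSLp := QuotientGroup.mk' (Subgroup.center SL)

lemma pr_surjective : Function.Surjective (pr p) := QuotientGroup.mk'_surjective _

noncomputable def H₀ : Subgroup PSLp := (U p).map (pr p)
noncomputable def Bb : Subgroup PSLp := (B p).map (pr p)

instance : Finite PSLp := Finite.of_surjective _ (pr_surjective p)

lemma card_PSL (hp : 5 ≤ p) : 2 * Nat.card PSLp = p * (p ^ 2 - 1) := by
  have := Subgroup.card_eq_card_quotient_mul_card_subgroup (Subgroup.center SL)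
  rw [card_SL, card_center p hp] at this
  rw [this, mul_comm]

lemma card_H₀ : Nat.card (H₀ p) = p := by
  have hinj : Function.Injective ((pr p).comp (U p).subtype) := by
    rw [← MonoidHom.ker_eq_bot_iff, eq_bot_iff]
    intro x hx
    rw [MonoidHom.mem_ker, MonoidHom.comp_apply] at hx
    have : (x : SL) ∈ Subgroup.center SL := by
      rwa [← QuotientGroup.ker_mk' (Subgroup.center SL), MonoidHom.mem_ker]
    rw [Subgroup.mem_bot]
    exact Subtype.ext (eq_one_of_mem_U_center p x.2 this)
  have : Nat.card (((pr p).comp (U p).subtype).range) = Nat.card (U p) :=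
    Nat.card_congr (Equiv.ofInjective _ hinj).symm
  rw [MonoidHom.range_comp, Subgroup.range_subtype] at this
  rw [H₀, this, card_U]

lemma card_Bb (hp : 5 ≤ p) : 2 * Nat.card (Bb p) = p * (p - 1) := by
  have h1 := card_eq_ker_mul_range ((pr p).comp (B p).subtype)
  have hker : ((pr p).comp (B p).subtype).ker = (Subgroup.center SL).subgroupOf (B p) := by
    ext x
    simp [MonoidHom.mem_ker, Subgroup.mem_subgroupOf, pr, QuotientGroup.eq_one_iff]
  rw [hker] at h1
  have h2 : Nat.card ((Subgroup.center SL).subgroupOf (B p)) = 2 := by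
    rw [Nat.card_congr (Subgroup.subgroupOfEquivOfLe (center_le_B p)).toEquiv, card_center p hp]
  rw [h2, card_B] at h1
  rw [MonoidHom.range_comp, Subgroup.range_subtype] at h1
  rw [Bb]
  omega

lemma Bb_le_normalizer : Bb p ≤ (Subgroup.normalizer ((H₀ p) : Set PSLp)) := by
  rintro g ⟨b, hb, rfl⟩
  rw [Subgroup.mem_normalizer_iff]
  intro h
  constructor
  · rintro ⟨x, hx, rfl⟩
    exact ⟨b * x * b⁻¹, conj_mem_U p hb hx, by simp [pr]⟩
  · rintro ⟨x, hx, hxe⟩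
    obtain ⟨A, rfl⟩ := pr_surjective p h
    have h2 : b⁻¹ * x * b ∈ U p := by
      have := conj_mem_U p (inv_mem hb) hx
      rwa [inv_inv] at this
    refine ⟨b⁻¹ * x * b, h2, ?_⟩
    have : pr p x = pr p (b * A * b⁻¹) := by
      rw [hxe]; simp [pr]
    simp only [_root_.map_mul, map_inv, this]
    group

lemma not_normal (hp : 5 ≤ p) : ¬ ((H₀ p).Normal) := by
  intro hn
  set w : SL := ⟨!![0, -1; 1, 0], by simp [Matrix.det_fin_two_of]⟩ with hw
  have hT : pr p (uMk p 1) ∈ H₀ p := ⟨uMk p 1, uMk_mem p 1, rfl⟩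
  have h2 : pr p (w * uMk p 1 * w⁻¹) ∈ H₀ p := by
    have := hn.conj_mem _ hT (pr p w)
    simpa [_root_.map_mul] using this
  have h3 : w * uMk p 1 * w⁻¹ ∈ (U p) ⊔ Subgroup.center SL := by
    have : w * uMk p 1 * w⁻¹ ∈ ((U p).map (pr p)).comap (pr p) := h2
    rw [Subgroup.comap_map_eq] at this
    rwa [(show (pr p).ker = Subgroup.center SL from QuotientGroup.ker_mk' _)] at this
  have h4 : w * uMk p 1 * w⁻¹ ∈ B p := by
    refine (sup_le (U_le_B p) (center_le_B p) : (U p) ⊔ Subgroup.center SL ≤ B p) h3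
  rw [mem_B_iff] at h4
  have : (w * uMk p 1 * w⁻¹).1 1 0 = -1 := by
    rw [Matrix.SpecialLinearGroup.coe_mul, Matrix.SpecialLinearGroup.coe_inv, Matrix.adjugate_fin_two]
    simp only [Matrix.SpecialLinearGroup.coe_mul]
    simp [hw, uMk, Matrix.mul_apply, Fin.sum_univ_two]
  rw [this] at h4
  have := neg_eq_zero.mp h4
  exact one_ne_zero this

lemma factorization_one (hp : 5 ≤ p) : (Nat.card PSLp).factorization p = 1 := by
  have hG := card_PSL p hp
  have hn : Nat.card PSLp ≠ 0 := Nat.card_pos.ne'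
  have hprime : p.Prime := Fact.out
  have hdvd : p ∣ Nat.card PSLp := by
    have h2 : p ∣ 2 * Nat.card PSLp := hG ▸ Dvd.intro _ rfl
    have hcop : Nat.Coprime p 2 := by
      rw [Nat.coprime_primes hprime Nat.prime_two]; omega
    exact (Nat.Coprime.dvd_of_dvd_mul_left hcop h2)
  have hndvd : ¬ (p ^ 2 ∣ Nat.card PSLp) := by
    intro hsq
    have h2 : p ^ 2 ∣ p * (p ^ 2 - 1) := hG ▸ hsq.mul_left 2
    rw [pow_two] at h2
    have h3 : p ∣ p * p - 1 := (mul_dvd_mul_iff_left (by omega : p ≠ 0)).mp h2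
    have h4 : p ∣ p ^ 2 := dvd_pow_self p (by omega)
    rw [pow_two] at h4
    have h5 : p ∣ 1 := by
      have h6 := Nat.dvd_sub h4 h3
      have hps : 1 ≤ p * p := by nlinarith
      have e : p * p - (p * p - 1) = 1 := by omega
      rwa [e] at h6
    exact Nat.Prime.one_lt hprime |>.ne' (Nat.dvd_one.mp h5)
  apply le_antisymm
  · by_contra h
    push_neg at h
    have : p ^ 2 ∣ Nat.card PSLp := (Nat.Prime.pow_dvd_iff_le_factorization hprime hn).mpr h
    exact hndvd this
  · exact (Nat.Prime.pow_dvd_iff_le_factorization hprime hn).mp (by rwa [pow_one])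

lemma arith_index (q a i N : ℕ) (hq : 5 ≤ q) (h1 : a * i = N) (h2 : 2 * a = q * (q - 1))
    (h3 : 2 * N = q * (q ^ 2 - 1)) : i = q + 1 := by
  obtain ⟨n, rfl⟩ : ∃ n, q = n + 1 := ⟨q - 1, by omega⟩
  have e1 : (n + 1) ^ 2 - 1 = n * (n + 2) := by
    have : (n + 1) ^ 2 = n * (n + 2) + 1 := by ring
    omega
  rw [e1] at h3
  have key : (2 * a) * i = 2 * N := by rw [mul_assoc, h1]
  rw [h2, h3] at key
  have e2 : (n + 1) * (n * (n + 2)) = ((n + 1) * (n + 1 - 1)) * (n + 2) := by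
    simp only [Nat.add_sub_cancel]
    ring
  rw [e2] at key
  have hpos : 0 < (n + 1) * (n + 1 - 1) := by simp only [Nat.add_sub_cancel]; nlinarith
  exact Nat.eq_of_mul_eq_mul_left hpos key

lemma index_Bb (hp : 5 ≤ p) : (Bb p).index = p + 1 :=
  arith_index p (Nat.card (Bb p)) (Bb p).index (Nat.card PSLp) hp
    (Subgroup.card_mul_index _) (card_Bb p hp) (card_PSL p hp)

lemma index_normalizer_H₀ (hp : 5 ≤ p) : (Subgroup.normalizer ((H₀ p) : Set PSLp)).index = p + 1 := by
  set d := (Subgroup.normalizer ((H₀ p) : Set PSLp)).index with hd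
  have hdvd : d ∣ (Bb p).index := Subgroup.index_dvd_of_le (Bb_le_normalizer p)
  rw [index_Bb p hp] at hdvd
  have hidx : Nat.card (Sylow p PSLp) = d := Sylow.card_eq_index_normalizer
    (Sylow.ofCard (H₀ p) (by rw [card_H₀, factorization_one p hp, pow_one]))
  have hmod : Nat.card (Sylow p PSLp) ≡ 1 [MOD p] := card_sylow_modEq_one p PSLp
  rw [hidx] at hmod
  have hne : d ≠ 1 := by
    intro h1
    exact not_normal p hp (Subgroup.normalizer_eq_top_iff.mp (Subgroup.index_eq_one.mp (hd ▸ h1)))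
  have hle : d ≤ p + 1 := Nat.le_of_dvd (by omega) hdvd
  have hmod' : d % p = 1 := by
    have h1 : d % p = 1 % p := hmod
    rwa [Nat.one_mod_eq_one.mpr (by omega)] at h1
  have h6 := Nat.div_add_mod d p
  rw [hmod'] at h6
  rcases Nat.eq_zero_or_pos (d / p) with h | h
  · rw [h] at h6
    omega
  · have hge : p ≤ p * (d / p) := Nat.le_mul_of_pos_right p h
    generalize hm : p * (d / p) = m at h6 hge
    omega

theorem main (hp : 5 ≤ p) (H : Subgroup PSLp) (hH : Nat.card H = p) :
    Nat.card (Subgroup.normalizer (H : Set PSLp)) = p * (p - 1) / 2 := by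
  have hidxH : Nat.card (Sylow p PSLp) = (Subgroup.normalizer (H : Set PSLp)).index :=
    Sylow.card_eq_index_normalizer (Sylow.ofCard H (by rw [hH, factorization_one p hp, pow_one]))
  have hidx0 : Nat.card (Sylow p PSLp) = (Subgroup.normalizer ((H₀ p) : Set PSLp)).index := Sylow.card_eq_index_normalizer
    (Sylow.ofCard (H₀ p) (by rw [card_H₀, factorization_one p hp, pow_one]))
  have h1 : (Subgroup.normalizer (H : Set PSLp)).index = p + 1 := by
    rw [← hidxH, hidx0, index_normalizer_H₀ p hp]
  have h2 : Nat.card (Subgroup.normalizer (H : Set PSLp)) * (p + 1) = Nat.card PSLp := by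
    rw [← h1]; exact Subgroup.card_mul_index _
  have h3 := card_PSL p hp
  obtain ⟨n, hn⟩ : ∃ n, p = n + 1 := ⟨p - 1, by omega⟩
  have e : p * (p ^ 2 - 1) = (p * (p - 1)) * (p + 1) := by
    subst hn
    have e1 : (n + 1) ^ 2 - 1 = n * (n + 2) := by
      have : (n + 1) ^ 2 = n * (n + 2) + 1 := by ring
      omega
    rw [e1]
    simp only [Nat.add_sub_cancel]
    ring
  have h4 : (2 * Nat.card (Subgroup.normalizer (H : Set PSLp))) * (p + 1) = (p * (p - 1)) * (p + 1) := by
    rw [mul_assoc, h2, h3, e]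
  have h5 : 2 * Nat.card (Subgroup.normalizer (H : Set PSLp)) = p * (p - 1) :=
    Nat.eq_of_mul_eq_mul_right (by omega) h4
  generalize hm : p * (p - 1) = m at h5 ⊢
  omega

end PSLaux

theorem normalizer_of_order_p_subgroup_PSL (p : ℕ) [Fact p.Prime] (hp : 5 ≤ p)
    (H : Subgroup (Matrix.ProjectiveSpecialLinearGroup (Fin 2) (ZMod p)))
    (hH : Nat.card H = p) :
    Nat.card (Subgroup.normalizer (H : Set (Matrix.ProjectiveSpecialLinearGroup (Fin 2) (ZMod p)))) = p * (p - 1) / 2 := by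
  exact PSLaux.main p hp H hH
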